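/- For 0 < δ < 1 and ν = (1-√δ)/(1+√δ), and for all θ ∈ (-1/2, 1/2), the identity tan( (π/2)(θ - h_ν(θ)) ) = √δ cos(πθ) / (1 - √δ sin(πθ)) holds. -/

import Mathlib

open Real

noncomputable def h (ν θ : ℝ) : ℝ :=
  (2 / π) * arctan (((ν + 1) * tan (π * θ / 2) + (ν - 1)) /
    ((ν - 1) * tan (π * θ / 2) + (ν + 1)))

set_option maxHeartbeats 1000000 in
theorem tan_theta_sub_h (δ : ℝ) (hδ : 0 < δ) (hδ1 : δ < 1)
    (θ : ℝ) (hθ : θ ∈ Set.Ioo (-(1:ℝ)/2) (1/2)) :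
    tan (π / 2 * (θ - h ((1 - Real.sqrt δ) / (1 + Real.sqrt δ)) θ)) =
      Real.sqrt δ * cos (π * θ) / (1 - Real.sqrt δ * sin (π * θ)) := by
  obtain ⟨hθ1, hθ2⟩ := hθ
  have hπ := Real.pi_pos
  set s := Real.sqrt δ with hs
  have hs0 : 0 < s := Real.sqrt_pos.2 hδ
  have hs1 : s < 1 := by
    rw [hs, show (1:ℝ) = Real.sqrt 1 by simp]
    exact Real.sqrt_lt_sqrt hδ.le hδ1
  set a := π * θ / 2 with ha
  have ha3 : -(π/4) < a := by rw [ha]; nlinarith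
  have ha4 : a < π/4 := by rw [ha]; nlinarith
  have ha1 : -(π/2) < a := by nlinarith
  have ha2 : a < π/2 := by nlinarith
  have hC : 0 < Real.cos a := Real.cos_pos_of_mem_Ioo ⟨ha1, ha2⟩
  set A := Real.sin a with hA
  set C := Real.cos a with hCdef
  have hpyth : A^2 + C^2 = 1 := Real.sin_sq_add_cos_sq a
  have hs2 : (0:ℝ) < Real.sqrt 2 := by positivity
  have hAltC : A < C := by
    have h1 : Real.sin (a - π/4) < 0 :=
      Real.sin_neg_of_neg_of_neg_pi_lt (by linarith) (by nlinarith)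
    rw [Real.sin_sub, Real.cos_pi_div_four, Real.sin_pi_div_four] at h1
    nlinarith
  have hCsA : 0 < C - s * A := by
    rcases le_or_gt A 0 with h0 | h0
    · nlinarith
    · nlinarith
  have h2AC : s * (2 * A * C) < 1 := by
    have h1 : Real.sin (2 * a) ≤ 1 := Real.sin_le_one _
    rw [Real.sin_two_mul] at h1
    nlinarith
  have hC' : C ≠ 0 := hC.ne'
  have hCsA' : C - s * A ≠ 0 := hCsA.ne'
  have hs1' : (1:ℝ) + s ≠ 0 := by positivity
  have htan : Real.tan a = A / C := Real.tan_eq_sin_div_cos a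
  have harg : (((1-s)/(1+s) + 1) * Real.tan a + ((1-s)/(1+s) - 1)) /
      (((1-s)/(1+s) - 1) * Real.tan a + ((1-s)/(1+s) + 1)) = (A - s*C)/(C - s*A) := by
    rw [htan]
    rw [show ((1-s)/(1+s) - 1) * (A/C) + ((1-s)/(1+s) + 1) = 2*(C - s*A)/((1+s)*C) by
      field_simp; ring]
    rw [show ((1-s)/(1+s) + 1) * (A/C) + ((1-s)/(1+s) - 1) = 2*(A - s*C)/((1+s)*C) by
      field_simp; ring]
    rw [div_div_div_eq]
    field_simp
  have hh : h ((1-s)/(1+s)) θ = (2/π) * Real.arctan ((A - s*C)/(C - s*A)) := by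
    unfold h
    rw [← ha, harg]
  set b := Real.arctan ((A - s*C)/(C - s*A)) with hb
  have hangle : π / 2 * (θ - h ((1-s)/(1+s)) θ) = a - b := by
    rw [hh, ha]
    field_simp
  have hcb : 0 < Real.cos b := Real.cos_arctan_pos _
  have htb : Real.tan b = (A - s*C)/(C - s*A) := Real.tan_arctan _
  have hsb : Real.sin b = (A - s*C)/(C - s*A) * Real.cos b := by
    rw [← htb, Real.tan_eq_sin_div_cos]
    field_simp
  have hden : 1 - s * Real.sin (π * θ) = 1 - s * (2 * A * C) := by
    rw [show π * θ = 2 * a by rw [ha]; ring, Real.sin_two_mul]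
  have hcos : Real.cos (π * θ) = 2 * C^2 - 1 := by
    rw [show π * θ = 2 * a by rw [ha]; ring, Real.cos_two_mul]
  rw [hangle, hcos, hden, Real.tan_eq_sin_div_cos, Real.sin_sub, Real.cos_sub, hsb]
  clear_value A C b s
  rw [← hA, ← hCdef]
  have hD : C * Real.cos b + A * ((A - s*C)/(C - s*A) * Real.cos b)
      = Real.cos b * (1 - s*(2*A*C)) / (C - s*A) := by
    rw [eq_div_iff hCsA']
    have key : (A - s*C)/(C - s*A) * (C - s*A) = A - s*C := div_mul_cancel₀ _ hCsA'
    linear_combination Real.cos b * hpyth + A * Real.cos b * key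
  have hDpos : 0 < Real.cos b * (1 - s*(2*A*C)) / (C - s*A) := by
    apply div_pos _ hCsA
    apply mul_pos hcb
    linarith
  have h1 : 1 - s * (2 * A * C) ≠ 0 := (show (0:ℝ) < 1 - s * (2 * A * C) by linarith).ne'
  rw [hD, div_eq_div_iff hDpos.ne' h1]
  have key' : (C - s*A) * (C - s*A)⁻¹ = 1 := mul_inv_cancel₀ hCsA'
  simp only [div_eq_mul_inv]
  linear_combination (Real.cos b * (1 - s*(2*A*C))) * ((-s * (C - s*A)⁻¹) * hpyth - A * key')
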